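/- For every finite simple graph G on n ≥ 2 vertices with no isolated vertices, the number of spanning trees satisfies τ(G) ≤ (Tr(Δ)/n)^n / (det Δ)^{1/n}, where Δ is the diagonal degree matrix of G. -/

import Mathlib

open Matrix
open scoped Classical

/-- Adjacency matrix of a simple graph, as a real matrix. -/
noncomputable def adjMat {n : ℕ} (G : SimpleGraph (Fin n)) : Matrix (Fin n) (Fin n) ℝ :=
  Matrix.of fun i j => if G.Adj i j then (1 : ℝ) else 0

/-- Diagonal degree matrix of a simple graph. -/
noncomputable def degMat {n : ℕ} (G : SimpleGraph (Fin n)) : Matrix (Fin n) (Fin n) ℝ :=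
  Matrix.diagonal fun i => (Nat.card (G.neighborSet i) : ℝ)

/-- Combinatorial Laplacian. -/
noncomputable def lapMat {n : ℕ} (G : SimpleGraph (Fin n)) : Matrix (Fin n) (Fin n) ℝ :=
  degMat G - adjMat G

/-- Number of spanning trees of `G`: spanning subgraphs of `G` that are trees. -/
noncomputable def numSpanningTrees {n : ℕ} (G : SimpleGraph (Fin n)) : ℕ :=
  Nat.card {H : SimpleGraph (Fin n) // H ≤ G ∧ H.IsTree}

/-- Matrix logarithm via functional calculus (log of eigenvalues), with log 0 = 0. -/
noncomputable def matLog {n : ℕ} (M : Matrix (Fin n) (Fin n) ℝ) : Matrix (Fin n) (Fin n) ℝ :=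
  if hM : M.IsHermitian then
    (hM.eigenvectorUnitary : Matrix (Fin n) (Fin n) ℝ) *
      Matrix.diagonal (fun i => Real.log (hM.eigenvalues i)) *
      star (hM.eigenvectorUnitary : Matrix (Fin n) (Fin n) ℝ)
  else 0

/-- Quantum relative entropy S(σ₁‖σ₂) = Tr(σ₁ log σ₁) − Tr(σ₁ log σ₂). -/
noncomputable def qRelEntropy {n : ℕ} (σ1 σ2 : Matrix (Fin n) (Fin n) ℝ) : ℝ :=
  (σ1 * matLog σ1).trace - (σ1 * matLog σ2).trace

/-- Projection Π_ℓ = I − E_ℓℓ. -/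
noncomputable def projP {n : ℕ} (ℓ : Fin n) : Matrix (Fin n) (Fin n) ℝ :=
  1 - Matrix.single ℓ ℓ 1

/-- Q_ℓ = E_ℓℓ. -/
noncomputable def projQ {n : ℕ} (ℓ : Fin n) : Matrix (Fin n) (Fin n) ℝ :=
  Matrix.single ℓ ℓ 1

/-- Pinching map Φ_ℓ. -/
noncomputable def pinch {n : ℕ} (ℓ : Fin n) (M : Matrix (Fin n) (Fin n) ℝ) :
    Matrix (Fin n) (Fin n) ℝ :=
  projP ℓ * M * projP ℓ + projQ ℓ * M * projQ ℓ

/-- Maximum degree. -/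
noncomputable def maxDeg {n : ℕ} (G : SimpleGraph (Fin n)) : ℕ :=
  Finset.univ.sup fun i => Nat.card (G.neighborSet i)

section TreeAux

open SimpleGraph

variable {n : ℕ}

/-- The parent of `i` in the tree `H` rooted at `ℓ`: second vertex of the unique path `i → ℓ`. -/
noncomputable def parentOf {H : SimpleGraph (Fin n)} (hT : H.IsTree) (ℓ i : Fin n) : Fin n :=
  ((hT.existsUnique_path i ℓ).exists.choose).getVert 1

lemma parentOf_eq {H : SimpleGraph (Fin n)} (hT : H.IsTree) (ℓ i : Fin n)
    (q : H.Walk i ℓ) (hq : q.IsPath) : parentOf hT ℓ i = q.getVert 1 := by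
  have h := (hT.existsUnique_path i ℓ).exists.choose_spec
  rw [parentOf, (hT.existsUnique_path i ℓ).unique h hq]

lemma parentOf_adj {H : SimpleGraph (Fin n)} (hT : H.IsTree) {ℓ i : Fin n} (hi : i ≠ ℓ) :
    H.Adj i (parentOf hT ℓ i) := by
  set p := (hT.existsUnique_path i ℓ).exists.choose with hp
  have hlen : 0 < p.length := by
    rcases Nat.eq_zero_or_pos p.length with h | h
    · exact absurd (SimpleGraph.Walk.eq_of_length_eq_zero h) hi
    · exact h
  have := p.adj_getVert_succ hlen
  have h2 : H.Adj i (p.getVert 1) := by simpa [SimpleGraph.Walk.getVert_zero] using this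
  exact h2

lemma adj_parent_cases {H : SimpleGraph (Fin n)} (hT : H.IsTree) (ℓ : Fin n) {a b : Fin n}
    (hab : H.Adj a b) :
    (a ≠ ℓ ∧ parentOf hT ℓ a = b) ∨ (b ≠ ℓ ∧ parentOf hT ℓ b = a) := by
  by_cases ha : a = ℓ
  · subst ha
    right
    refine ⟨hab.symm.ne, ?_⟩
    have h2 : (SimpleGraph.Walk.cons hab.symm SimpleGraph.Walk.nil).IsPath := by
      simp [hab.symm.ne]
    have := parentOf_eq hT a b _ h2
    simpa using this
  · by_cases hb : b = ℓ
    · subst hb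
      left
      refine ⟨ha, ?_⟩
      have h2 : (SimpleGraph.Walk.cons hab SimpleGraph.Walk.nil).IsPath := by
        simp [hab.ne]
      have := parentOf_eq hT b a _ h2
      simpa using this
    · set p := (hT.existsUnique_path b ℓ).exists.choose with hpdef
      have hp : p.IsPath := (hT.existsUnique_path b ℓ).exists.choose_spec
      by_cases hmem : a ∈ p.support
      · right
        refine ⟨hb, ?_⟩
        have h1 : (p.takeUntil a hmem).IsPath := hp.takeUntil hmem
        have h2 : (SimpleGraph.Walk.cons hab.symm SimpleGraph.Walk.nil).IsPath := by
          simp [hab.symm.ne]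
        have htu : p.takeUntil a hmem = SimpleGraph.Walk.cons hab.symm SimpleGraph.Walk.nil :=
          congrArg Subtype.val (hT.IsAcyclic.path_unique ⟨_, h1⟩ ⟨_, h2⟩)
        have hspec := p.take_spec hmem
        have hpar : parentOf hT ℓ b = p.getVert 1 := by
          have h := (hT.existsUnique_path b ℓ).exists.choose_spec
          exact parentOf_eq hT ℓ b p hp
        rw [hpar, ← hspec, htu]
        simp [SimpleGraph.Walk.cons_append, SimpleGraph.Walk.nil_append,
          SimpleGraph.Walk.getVert_cons_succ, SimpleGraph.Walk.getVert_zero]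
      · left
        refine ⟨ha, ?_⟩
        have hcons : (SimpleGraph.Walk.cons hab p).IsPath := hp.cons hmem
        have := parentOf_eq hT ℓ a _ hcons
        simpa [SimpleGraph.Walk.getVert_cons_succ, SimpleGraph.Walk.getVert_zero] using this

lemma le_of_parent_eq {H₁ H₂ : SimpleGraph (Fin n)} (h1 : H₁.IsTree) (h2 : H₂.IsTree) (ℓ : Fin n)
    (hp : ∀ i, i ≠ ℓ → parentOf h1 ℓ i = parentOf h2 ℓ i) : H₁ ≤ H₂ := by
  intro a b hab
  rcases adj_parent_cases h1 ℓ hab with ⟨ha, hpa⟩ | ⟨hb, hpb⟩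
  · have := parentOf_adj h2 ha
    rwa [← hp a ha, hpa] at this
  · have := parentOf_adj h2 hb
    rw [← hp b hb, hpb] at this
    exact this.symm

/-- Encoding of a spanning tree of `G` by the parent function of vertices other than `ℓ`. -/
noncomputable def treeEnc {n : ℕ} (G : SimpleGraph (Fin n)) (ℓ : Fin n)
    (H : {H : SimpleGraph (Fin n) // H ≤ G ∧ H.IsTree}) (i : {i : Fin n // i ≠ ℓ}) :
    G.neighborSet i.val :=
  ⟨parentOf H.2.2 ℓ i.1, H.2.1 (parentOf_adj H.2.2 i.2)⟩

lemma treeEnc_injective {n : ℕ} (G : SimpleGraph (Fin n)) (ℓ : Fin n) :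
    Function.Injective (treeEnc G ℓ) := by
  intro H₁ H₂ h
  have hp : ∀ i, i ≠ ℓ → parentOf H₁.2.2 ℓ i = parentOf H₂.2.2 ℓ i := fun i hi =>
    congrArg Subtype.val (congrFun h ⟨i, hi⟩)
  exact Subtype.ext (le_antisymm (le_of_parent_eq H₁.2.2 H₂.2.2 ℓ hp)
    (le_of_parent_eq H₂.2.2 H₁.2.2 ℓ fun i hi => (hp i hi).symm))

lemma numSpanningTrees_le_prod {n : ℕ} (G : SimpleGraph (Fin n)) (ℓ : Fin n) :
    numSpanningTrees G ≤ ∏ i ∈ Finset.univ.erase ℓ, Nat.card (G.neighborSet i) := by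
  have h1 : numSpanningTrees G ≤ Nat.card (∀ i : {i : Fin n // i ≠ ℓ}, G.neighborSet i.val) :=
    Nat.card_le_card_of_injective _ (treeEnc_injective G ℓ)
  rw [Nat.card_pi] at h1
  refine h1.trans_eq ?_
  rw [← Finset.prod_subtype (Finset.univ.erase ℓ)
    (fun i => by simp [Finset.mem_erase]) (fun i => Nat.card (G.neighborSet i))]

end TreeAux

lemma prod_erase_le_pow_div_root (n : ℕ) (hn : 2 ≤ n) (d : Fin n → ℝ) (hd : ∀ i, 0 < d i)
    (ℓ : Fin n) (hmax : ∀ i, d i ≤ d ℓ) :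
    ∏ i ∈ Finset.univ.erase ℓ, d i ≤ ((∑ i, d i) / n) ^ n / (∏ i, d i) ^ ((1 : ℝ) / n) := by
  have hn0 : (0 : ℝ) < n := by positivity
  set P : ℝ := ∏ i, d i with hPdef
  set A : ℝ := (∑ i, d i) / n with hAdef
  have hP : 0 < P := Finset.prod_pos fun i _ => hd i
  set GM : ℝ := P ^ ((1 : ℝ) / n) with hGMdef
  have hGM : 0 < GM := Real.rpow_pos_of_pos hP _
  -- AM–GM
  have hGMA : GM ≤ A := by
    have h := Real.geom_mean_le_arith_mean_weighted Finset.univ (fun _ => (1 : ℝ) / n) d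
      (fun i _ => by positivity) (by simp; field_simp) (fun i _ => (hd i).le)
    rw [Real.finset_prod_rpow _ _ (fun i _ => (hd i).le)] at h
    calc GM = P ^ ((1:ℝ)/n) := rfl
      _ ≤ ∑ i, (1:ℝ)/n * d i := h
      _ = A := by rw [hAdef, Finset.sum_div]; exact Finset.sum_congr rfl fun i _ => by ring
  have hA : 0 < A := lt_of_lt_of_le hGM hGMA
  have hAd : A ≤ d ℓ := by
    rw [hAdef, div_le_iff₀ hn0]
    calc ∑ i, d i ≤ ∑ _i : Fin n, d ℓ := Finset.sum_le_sum fun i _ => hmax i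
      _ = d ℓ * n := by simp [mul_comm]
  have hPGM : P = GM ^ n := by
    rw [hGMdef, ← Real.rpow_natCast (P ^ ((1:ℝ)/n)) n, ← Real.rpow_mul hP.le]
    rw [one_div_mul_cancel (by positivity : (n:ℝ) ≠ 0), Real.rpow_one]
  have hkey : P * GM ≤ A ^ n * d ℓ := by
    calc P * GM = GM ^ n * GM := by rw [hPGM]
      _ = GM ^ (n + 1) := by ring
      _ ≤ A ^ (n + 1) := pow_le_pow_left₀ hGM.le hGMA _
      _ = A ^ n * A := by ring
      _ ≤ A ^ n * d ℓ := by
          exact mul_le_mul_of_nonneg_left hAd (by positivity)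
  have hprod : ∏ i ∈ Finset.univ.erase ℓ, d i = P / d ℓ := by
    rw [eq_div_iff (hd ℓ).ne', mul_comm, hPdef, Finset.mul_prod_erase _ _ (Finset.mem_univ ℓ)]
  rw [hprod, div_le_div_iff₀ (hd ℓ) hGM]
  linarith [hkey]

/-- τ(G) ≤ (Tr(Δ)/n)^n / (det Δ)^{1/n}, for G with no isolated vertices. -/
theorem numSpanningTrees_le_avgDeg_div_detRoot (n : ℕ) (hn : 2 ≤ n)
    (G : SimpleGraph (Fin n)) (hdeg : ∀ i : Fin n, 0 < Nat.card (G.neighborSet i)) :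
    (numSpanningTrees G : ℝ) ≤
      ((degMat G).trace / n) ^ n / (degMat G).det ^ ((1 : ℝ) / n) := by
  have hne : Nonempty (Fin n) := ⟨⟨0, by omega⟩⟩
  set d : Fin n → ℝ := fun i => (Nat.card (G.neighborSet i) : ℝ) with hd
  have hdpos : ∀ i, 0 < d i := fun i => by simp only [hd]; exact_mod_cast hdeg i
  obtain ⟨ℓ, -, hℓ⟩ := Finset.exists_max_image Finset.univ d Finset.univ_nonempty
  have h1 : (numSpanningTrees G : ℝ) ≤ ∏ i ∈ Finset.univ.erase ℓ, d i := by
    have h := numSpanningTrees_le_prod G ℓ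
    calc (numSpanningTrees G : ℝ)
        ≤ ((∏ i ∈ Finset.univ.erase ℓ, Nat.card (G.neighborSet i) : ℕ) : ℝ) := by
          exact_mod_cast h
      _ = ∏ i ∈ Finset.univ.erase ℓ, d i := by push_cast; rfl
  have h2 := prod_erase_le_pow_div_root n hn d hdpos ℓ (fun i => hℓ i (Finset.mem_univ i))
  have htr : (degMat G).trace = ∑ i, d i := by rw [degMat, Matrix.trace_diagonal]
  have hdet : (degMat G).det = ∏ i, d i := by rw [degMat, Matrix.det_diagonal]
  rw [htr, hdet]
  exact h1.trans h2
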